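/- In the 3-agent, 3-good instance with valuations v_1 = (9, 6, 6), v_2 = (1, 10, 10), v_3 = (7, 7, 7), there is no EQ1 allocation A in which agent 1 is richest, i.e., satisfying v_1(A_1) >= v_2(A_2) and v_1(A_1) >= v_3(A_3). -/
import Mathlib


open Finset

/-- An allocation is a partition of the goods among the agents. -/
def isPartition {ι γ : Type*} [Fintype ι] [Fintype γ] [DecidableEq γ]
    (A : ι → Finset γ) : Prop :=
  (∀ i j, i ≠ j → Disjoint (A i) (A j)) ∧ Finset.univ.biUnion A = Finset.univ

/-- Additive value of a bundle. -/
def bundleVal {γ : Type*} (v : γ → ℚ) (S : Finset γ) : ℚ := ∑ g ∈ S, v g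

/-- EQ1: for every pair of agents `i, j` with `A i` nonempty, some good can be
removed from `A i` so that `i`'s value drops to at most `j`'s value. -/
def EQ1 {ι γ : Type*} [DecidableEq γ] (v : ι → γ → ℚ) (A : ι → Finset γ) : Prop :=
  ∀ i j, A i ≠ ∅ → ∃ g ∈ A i, bundleVal (v i) ((A i).erase g) ≤ bundleVal (v j) (A j)

/-- The instance of Fig. 5. -/
def vFig5 : Fin 3 → Fin 3 → ℚ := ![![9, 6, 6], ![1, 10, 10], ![7, 7, 7]]


def vZ : Fin 3 → Fin 3 → ℤ := ![![9, 6, 6], ![1, 10, 10], ![7, 7, 7]]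

lemma vFig5_eq_cast : ∀ i g, vFig5 i g = ((vZ i g : ℤ) : ℚ) := by decide

lemma bundleVal_cast (i : Fin 3) (S : Finset (Fin 3)) :
    bundleVal (vFig5 i) S = ((∑ g ∈ S, vZ i g : ℤ) : ℚ) := by
  unfold bundleVal
  rw [Int.cast_sum]
  exact Finset.sum_congr rfl fun g _ => vFig5_eq_cast i g

set_option maxRecDepth 10000 in
lemma keyZ :
    ¬ ∃ A : Fin 3 → Finset (Fin 3),
        ((∀ i j, i ≠ j → Disjoint (A i) (A j)) ∧ Finset.univ.biUnion A = Finset.univ) ∧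
        (∀ i j, A i ≠ ∅ → ∃ g ∈ A i, (∑ h ∈ (A i).erase g, vZ i h) ≤ ∑ h ∈ A j, vZ j h) ∧
        (∑ g ∈ A 0, vZ 0 g) ≥ (∑ g ∈ A 1, vZ 1 g) ∧
        (∑ g ∈ A 0, vZ 0 g) ≥ (∑ g ∈ A 2, vZ 2 g) := by
  decide

/-- in the instance of Fig. 5, there is no EQ1 allocation in
which agent 1 is richest. -/
theorem stmt9 :
    ¬ ∃ A : Fin 3 → Finset (Fin 3),
        isPartition A ∧ EQ1 vFig5 A ∧
        bundleVal (vFig5 0) (A 0) ≥ bundleVal (vFig5 1) (A 1) ∧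
        bundleVal (vFig5 0) (A 0) ≥ bundleVal (vFig5 2) (A 2) := by
  rintro ⟨A, hpart, heq1, h1, h2⟩
  exact keyZ ⟨A, hpart, fun i j hne => by
    obtain ⟨g, hg, hle⟩ := heq1 i j hne
    exact ⟨g, hg, by
      have := hle
      rw [bundleVal_cast, bundleVal_cast] at this
      exact_mod_cast this⟩,
    by rw [bundleVal_cast, bundleVal_cast] at h1; exact_mod_cast h1,
    by rw [bundleVal_cast, bundleVal_cast] at h2; exact_mod_cast h2⟩
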